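/- If f : ℂ² → ℂ² satisfies φ(f(X),f(Y)) = φ(X,Y) for all X, Y ∈ ℂ², then f is an affine mapping with orthogonal linear part, i.e., there exist c ∈ ℂ² and a ℂ-linear map L : ℂ² → ℂ² with (L(X))₁² + (L(X))₂² = X₁² + X₂² for all X ∈ ℂ², such that f(X) = L(X) + c for all X ∈ ℂ². -/
import Mathlib

private lemma key_solve (u₁ u₂ v₁ v₂ a b x y : ℂ)
    (ru : u₁^2 + u₂^2 = 1) (rv : v₁^2 + v₂^2 = 1) (ruv : u₁*v₁ + u₂*v₂ = 0)
    (e1 : a*u₁ + b*u₂ = x) (e2 : a*v₁ + b*v₂ = y) :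
    a = x*u₁ + y*v₁ ∧ b = x*u₂ + y*v₂ := by
  have hd : (u₁*v₂ - u₂*v₁)^2 = 1 := by
    linear_combination (v₁^2 + v₂^2) * ru + rv - (u₁*v₁ + u₂*v₂) * ruv
  have had : a * (u₁*v₂ - u₂*v₁) = x*v₂ - y*u₂ := by
    linear_combination v₂ * e1 - u₂ * e2
  have hbd : b * (u₁*v₂ - u₂*v₁) = y*u₁ - x*v₁ := by
    linear_combination u₁ * e2 - v₁ * e1
  have h2a : (x*v₂ - y*u₂) * (u₁*v₂ - u₂*v₁) = x*u₁ + y*v₁ := by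
    linear_combination (-x*v₁ - y*u₁) * ruv + x*u₁ * rv + y*v₁ * ru
  have h2b : (y*u₁ - x*v₁) * (u₁*v₂ - u₂*v₁) = x*u₂ + y*v₂ := by
    linear_combination (-x*v₂ - y*u₂) * ruv + y*v₂ * ru + x*u₂ * rv
  constructor
  · linear_combination (-a) * hd + (u₁*v₂ - u₂*v₁) * had + h2a
  · linear_combination (-b) * hd + (u₁*v₂ - u₂*v₁) * hbd + h2b

/-- A map `f : ℂ² → ℂ²` preserving `φ` (all distances) is an affine mapping with
orthogonal linear part. -/
theorem stmt_11 (f : ℂ × ℂ → ℂ × ℂ)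
    (hf : ∀ X Y : ℂ × ℂ,
      ((f X).1 - (f Y).1) ^ 2 + ((f X).2 - (f Y).2) ^ 2 =
        (X.1 - Y.1) ^ 2 + (X.2 - Y.2) ^ 2) :
    ∃ L : (ℂ × ℂ) →ₗ[ℂ] (ℂ × ℂ), ∃ c : ℂ × ℂ,
      (∀ X : ℂ × ℂ, (L X).1 ^ 2 + (L X).2 ^ 2 = X.1 ^ 2 + X.2 ^ 2) ∧
      (∀ X : ℂ × ℂ, f X = L X + c) := by
  set u₁ : ℂ := (f (1, 0)).1 - (f 0).1 with hu₁
  set u₂ : ℂ := (f (1, 0)).2 - (f 0).2 with hu₂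
  set v₁ : ℂ := (f (0, 1)).1 - (f 0).1 with hv₁
  set v₂ : ℂ := (f (0, 1)).2 - (f 0).2 with hv₂
  have ru : u₁^2 + u₂^2 = 1 := by
    have h := hf (1, 0) 0
    simpa using h
  have rv : v₁^2 + v₂^2 = 1 := by
    have h := hf (0, 1) 0
    simpa using h
  have ruv : u₁*v₁ + u₂*v₂ = 0 := by
    have h1 := hf (1, 0) 0
    have h2 := hf (0, 1) 0
    have h3 := hf (1, 0) (0, 1)
    simp only [Prod.fst_zero, Prod.snd_zero] at h1 h2 h3
    rw [hu₁, hu₂, hv₁, hv₂]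
    linear_combination (h1 + h2 - h3) / 2
  -- the key pointwise identity
  have main : ∀ X : ℂ × ℂ,
      (f X).1 - (f 0).1 = X.1*u₁ + X.2*v₁ ∧ (f X).2 - (f 0).2 = X.1*u₂ + X.2*v₂ := by
    intro X
    apply key_solve u₁ u₂ v₁ v₂ _ _ _ _ ru rv ruv
    · -- B(gX, u) = X.1
      have h1 := hf X 0
      have h2 := hf (1, 0) 0
      have h3 := hf X (1, 0)
      simp only [Prod.fst_zero, Prod.snd_zero] at h1 h2 h3
      rw [hu₁, hu₂]
      linear_combination (h1 + h2 - h3) / 2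
    · have h1 := hf X 0
      have h2 := hf (0, 1) 0
      have h3 := hf X (0, 1)
      simp only [Prod.fst_zero, Prod.snd_zero] at h1 h2 h3
      rw [hv₁, hv₂]
      linear_combination (h1 + h2 - h3) / 2
  refine ⟨{ toFun := fun X => (X.1*u₁ + X.2*v₁, X.1*u₂ + X.2*v₂)
            map_add' := by intro X Y; ext <;> simp <;> ring
            map_smul' := by intro m X; ext <;> simp <;> ring }, f 0, ?_, ?_⟩
  · intro X
    simp only [LinearMap.coe_mk, AddHom.coe_mk]
    linear_combination X.1^2*ru + X.2^2*rv + 2*X.1*X.2*ruv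
  · intro X
    have h := main X
    ext
    · simp only [LinearMap.coe_mk, AddHom.coe_mk, Prod.fst_add]
      linear_combination h.1
    · simp only [LinearMap.coe_mk, AddHom.coe_mk, Prod.snd_add]
      linear_combination h.2
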